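/- Let a ∈ (-5/2, -2), b ∈ (0,1), t₂ > 0, and let c ∈ (0,1) be sufficiently small (depending on a, b, t₂). Define 𝒟^b h(ξ) = ( ∫_ℝ |h(ξ)-h(η)|²/|ξ-η|^{1+2b} dη )^{1/2}. Then there exists a constant κ > 0 (depending on t₂, a, b) such that for all ξ with 0 < |ξ| ≤ c, 𝒟^b( e^{i t₂ ξ|ξ|^{1+a}} )(ξ) ≥ κ |ξ|^{(1+a) b}. -/

import Mathlib

open MeasureTheory ENNReal Real

/-- The one-dimensional Stein derivative of order `b`:
`𝒟^b h(ξ) = (∫ |h(ξ)-h(η)|²/|ξ-η|^{1+2b} dη)^{1/2}`. -/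
noncomputable def steinDeriv1 (b : ℝ) (h : ℝ → ℂ) (x : ℝ) : ℝ≥0∞ :=
  (∫⁻ y, (‖h x - h y‖₊ : ℝ≥0∞) ^ (2 : ℕ) /
      (‖x - y‖₊ : ℝ≥0∞) ^ (1 + 2 * b) ∂volume) ^ ((1 : ℝ) / 2)

lemma aux_norm (α β : ℝ) :
    ‖Complex.exp (Complex.I * α) - Complex.exp (Complex.I * β)‖ = 2 * |Real.sin ((α - β)/2)| := by
  have h1 : Complex.exp (Complex.I * α) - Complex.exp (Complex.I * β)
      = Complex.exp (Complex.I * β) * (Complex.exp (Complex.I * ((α - β : ℝ) : ℂ)) - 1) := by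
    rw [mul_sub, ← Complex.exp_add]
    push_cast
    ring_nf
  rw [h1, norm_mul]
  have h2 : ‖Complex.exp (Complex.I * β)‖ = 1 := by
    exact Complex.norm_exp_I_mul_ofReal β
  rw [h2, one_mul]
  set θ := α - β
  have h3 : Complex.exp (Complex.I * (θ : ℂ)) - 1
      = ((Real.cos θ - 1 : ℝ) : ℂ) + ((Real.sin θ : ℝ) : ℂ) * Complex.I := by
    rw [mul_comm, Complex.exp_mul_I]
    rw [← Complex.ofReal_cos, ← Complex.ofReal_sin]
    push_cast
    ring
  rw [h3]
  have h4 : ‖((Real.cos θ - 1 : ℝ) : ℂ) + ((Real.sin θ : ℝ) : ℂ) * Complex.I‖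
      = Real.sqrt ((Real.cos θ - 1)^2 + (Real.sin θ)^2) := by
    rw [Complex.norm_add_mul_I]
  rw [h4]
  have h5 : (Real.cos θ - 1)^2 + (Real.sin θ)^2 = (2 * |Real.sin (θ/2)|)^2 := by
    have := Real.sin_sq_add_cos_sq θ
    have h6 : Real.sin (θ/2)^2 = 1/2 - Real.cos (2*(θ/2))/2 := Real.sin_sq_eq_half_sub _
    rw [show 2*(θ/2) = θ by ring] at h6
    rw [mul_pow, sq_abs]
    nlinarith
  rw [h5, Real.sqrt_sq (by positivity)]

lemma aux_mvt {p x y : ℝ} (hx : 0 < x) (hxy : x < y) :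
    ∃ c, x < c ∧ c < y ∧ y ^ p - x ^ p = p * c ^ (p - 1) * (y - x) := by
  have hcont : ContinuousOn (fun z : ℝ => z ^ p) (Set.Icc x y) := fun z hz =>
    ((Real.hasDerivAt_rpow_const (p := p)
      (Or.inl (ne_of_gt (lt_of_lt_of_le hx hz.1)))).continuousAt).continuousWithinAt
  have hderiv : ∀ z ∈ Set.Ioo x y, HasDerivAt (fun z : ℝ => z ^ p) (p * z ^ (p - 1)) z := fun z hz =>
    Real.hasDerivAt_rpow_const (Or.inl (ne_of_gt (hx.trans hz.1)))
  obtain ⟨c, hc, hceq⟩ := exists_hasDerivAt_eq_slope (fun z : ℝ => z ^ p)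
    (fun z => p * z ^ (p - 1)) hxy hcont hderiv
  exact ⟨c, hc.1, hc.2, by rw [hceq]; field_simp [sub_ne_zero.mpr hxy.ne']⟩

lemma aux_phase (t₂ x : ℝ) (p : ℝ) (hx : 0 < x) :
    Complex.I * (t₂ : ℂ) * ((x * |x| ^ p : ℝ) : ℂ)
      = Complex.I * ((t₂ * x ^ (1 + p) : ℝ) : ℂ) := by
  rw [abs_of_pos hx, show x * x ^ p = x ^ (1 + p) by
    rw [Real.rpow_add hx, Real.rpow_one]]
  push_cast
  ring

-- pointwise lower bound on the near region, positive ξ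
lemma aux_pointwise (a : ℝ) (ha2 : a < -2) (t₂ : ℝ) (ht₂ : 0 < t₂)
    (ξ η : ℝ) (hξ : 0 < ξ)
    (hη1 : ξ < η) (hη2 : η ≤ (3/2)*ξ)
    (hΔπ : t₂ * (-(2+a)) * (ξ ^ (1+a)) * (η - ξ) ≤ π) :
    (2/π * (t₂ * (-(2+a)) * (3/2 : ℝ)^(1+a)) * ξ^(1+a) * (η - ξ))^2
      ≤ ‖Complex.exp (Complex.I * (t₂ : ℂ) * ((ξ * |ξ| ^ (1 + a) : ℝ) : ℂ))
          - Complex.exp (Complex.I * (t₂ : ℂ) * ((η * |η| ^ (1 + a) : ℝ) : ℂ))‖^2 := by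
  have hη0 : 0 < η := hξ.trans hη1
  set A : ℝ := -(2+a) with hA_def
  have hA : 0 < A := by simp only [hA_def]; linarith
  -- rewrite phases
  rw [aux_phase t₂ ξ (1+a) hξ, aux_phase t₂ η (1+a) hη0,
    show (1:ℝ) + (1+a) = 2+a by ring, aux_norm]
  -- MVT
  obtain ⟨c, hc1, hc2, hceq⟩ := aux_mvt (p := 2+a) hξ hη1
  rw [show (2+a) - 1 = 1+a by ring] at hceq
  set Δ : ℝ := t₂ * ξ ^ (2+a) - t₂ * η ^ (2+a) with hΔ_def
  have hΔeq : Δ = t₂ * A * c ^ (1+a) * (η - ξ) := by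
    have : η ^ (2+a) - ξ ^ (2+a) = (2+a) * c ^ (1+a) * (η - ξ) := hceq
    simp only [hΔ_def, hA_def]; nlinarith
  have hc0 : 0 < c := hξ.trans hc1
  have hcp : (0:ℝ) < c ^ (1+a) := Real.rpow_pos_of_pos hc0 _
  have hΔpos : 0 ≤ Δ := by
    rw [hΔeq]
    exact mul_nonneg (by positivity) (by linarith)
  -- upper bound
  have hcub : c ^ (1+a) ≤ ξ ^ (1+a) :=
    Real.rpow_le_rpow_of_nonpos hξ hc1.le (by linarith)
  have hΔub : Δ ≤ π := by
    calc Δ = t₂ * A * c ^ (1+a) * (η - ξ) := hΔeq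
    _ ≤ t₂ * A * ξ ^ (1+a) * (η - ξ) := by
        have h1 : 0 ≤ η - ξ := by linarith
        have := mul_le_mul_of_nonneg_right (mul_le_mul_of_nonneg_left hcub
          (by positivity : (0:ℝ) ≤ t₂ * A)) h1
        calc t₂ * A * c ^ (1+a) * (η - ξ) = t₂ * A * (c ^ (1+a)) * (η-ξ) := by ring
        _ ≤ t₂ * A * (ξ ^ (1+a)) * (η-ξ) := this
    _ ≤ π := hΔπ
  -- lower bound
  have hclb : ((3:ℝ)/2)^(1+a) * ξ^(1+a) ≤ c ^ (1+a) := by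
    have h1 : ((3:ℝ)/2 * ξ) ^ (1+a) ≤ c ^ (1+a) :=
      Real.rpow_le_rpow_of_nonpos hc0 (by linarith) (by linarith)
    rwa [Real.mul_rpow (by norm_num) hξ.le] at h1
  have hΔlb : t₂ * A * ((3:ℝ)/2)^(1+a) * ξ^(1+a) * (η - ξ) ≤ Δ := by
    rw [hΔeq]
    have h1 : 0 ≤ η - ξ := by linarith
    have := mul_le_mul_of_nonneg_right (mul_le_mul_of_nonneg_left hclb
      (by positivity : (0:ℝ) ≤ t₂ * A)) h1
    calc t₂ * A * ((3:ℝ)/2)^(1+a) * ξ^(1+a) * (η - ξ)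
        = t₂ * A * (((3:ℝ)/2)^(1+a) * ξ^(1+a)) * (η-ξ) := by ring
    _ ≤ t₂ * A * (c ^ (1+a)) * (η-ξ) := this
  -- sin bound
  have hsin : Δ / π ≤ Real.sin (Δ/2) := by
    have := Real.mul_le_sin (x := Δ/2) (by linarith) (by linarith)
    calc Δ / π = 2/π * (Δ/2) := by ring
    _ ≤ Real.sin (Δ/2) := this
  have hsin_abs : Δ / π ≤ |Real.sin (Δ/2)| := hsin.trans (le_abs_self _)
  have hΔπnonneg : 0 ≤ Δ / π := div_nonneg hΔpos Real.pi_pos.le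
  have hfinal : 2/π * (t₂ * A * ((3:ℝ)/2)^(1+a)) * ξ^(1+a) * (η - ξ)
      ≤ 2 * |Real.sin (Δ/2)| := by
    have hπ : (0:ℝ) < π := Real.pi_pos
    have h3 : (t₂ * A * ((3:ℝ)/2)^(1+a) * ξ^(1+a) * (η - ξ)) / π ≤ Δ / π := by gcongr
    calc 2/π * (t₂ * A * ((3:ℝ)/2)^(1+a)) * ξ^(1+a) * (η - ξ)
        = 2 * ((t₂ * A * ((3:ℝ)/2)^(1+a) * ξ^(1+a) * (η - ξ)) / π) := by ring
    _ ≤ 2 * (Δ / π) := by linarith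
    _ ≤ 2 * |Real.sin (Δ/2)| := by linarith [hsin_abs]
  have hlhs_nonneg : 0 ≤ 2/π * (t₂ * A * ((3:ℝ)/2)^(1+a)) * ξ^(1+a) * (η - ξ) := by
    have hπ : (0:ℝ) < π := Real.pi_pos
    exact mul_nonneg (by positivity) (by linarith)
  exact pow_le_pow_left₀ hlhs_nonneg hfinal 2
lemma aux_trans (g : ℝ → ℝ≥0∞) (ξ r : ℝ) :
    ∫⁻ s in Set.Ioc 0 r, g s = ∫⁻ η in Set.Ioc ξ (ξ+r), g (η - ξ) := by
  have hpre : (fun x : ℝ => x + ξ) ⁻¹' Set.Ioc ξ (ξ+r) = Set.Ioc 0 r := by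
    ext x
    simp only [Set.mem_preimage, Set.mem_Ioc]
    constructor <;> rintro ⟨h1, h2⟩ <;> constructor <;> linarith
  have h := (measurePreserving_add_right volume ξ).setLIntegral_comp_preimage_emb
    (MeasurableEquiv.addRight ξ).measurableEmbedding (fun η => g (η - ξ)) (Set.Ioc ξ (ξ+r))
  rw [hpre] at h
  simp only [add_sub_cancel_right] at h
  exact h

lemma aux_core (a : ℝ) (ha1 : -(5/2) < a) (ha2 : a < -2) (b : ℝ) (hb0 : 0 < b) (hb1 : b < 1)
    (t₂ : ℝ) (ht₂ : 0 < t₂) :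
    ∃ K₀ : ℝ, 0 < K₀ ∧ ∀ ξ : ℝ, 0 < ξ → ξ ≤ 1 →
      ENNReal.ofReal (K₀ * ξ ^ (2*((1+a)*b))) ≤
        ∫⁻ y, (‖Complex.exp (Complex.I * (t₂ : ℂ) * ((ξ * |ξ| ^ (1 + a) : ℝ) : ℂ))
            - Complex.exp (Complex.I * (t₂ : ℂ) * ((y * |y| ^ (1 + a) : ℝ) : ℂ))‖₊ : ℝ≥0∞) ^ (2 : ℕ) /
          (‖ξ - y‖₊ : ℝ≥0∞) ^ (1 + 2 * b) ∂volume := by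
  have hπ : (0:ℝ) < π := Real.pi_pos
  set A : ℝ := -(2+a) with hA_def
  have hA : 0 < A := by simp only [hA_def]; linarith
  set δ : ℝ := min (1/2) (π/(t₂*A)) with hδ_def
  have hδ : 0 < δ := lt_min (by norm_num) (by positivity)
  have hδhalf : δ ≤ 1/2 := min_le_left _ _
  have hδπ : t₂ * A * δ ≤ π := by
    have h1 : δ ≤ π/(t₂*A) := min_le_right _ _
    rw [le_div_iff₀ (by positivity)] at h1
    nlinarith
  set M : ℝ := t₂ * A * (3/2 : ℝ)^(1+a) with hM_def
  have hM : 0 < M := mul_pos (mul_pos ht₂ hA) (Real.rpow_pos_of_pos (by norm_num) _)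
  set K : ℝ := (2/π * M)^2 with hK_def
  have hK : 0 < K := pow_pos (mul_pos (by positivity) hM) 2
  refine ⟨K * δ^(2-2*b) / (2-2*b), div_pos (mul_pos hK (Real.rpow_pos_of_pos hδ _)) (by linarith), fun ξ hξ hξ1 => ?_⟩
  have hξp : (0:ℝ) < ξ^(-(1+a)) := Real.rpow_pos_of_pos hξ _
  set r : ℝ := δ * ξ^(-(1+a)) with hr_def
  have hrpos : 0 < r := mul_pos hδ hξp
  have hrhalf : r ≤ ξ/2 := by
    have h1 : ξ^(-(1+a)) = ξ * ξ^(-(2+a)) := by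
      rw [show -(1+a) = 1 + -(2+a) by ring, Real.rpow_add hξ, Real.rpow_one]
    have h2 : ξ^(-(2+a)) ≤ 1 := Real.rpow_le_one hξ.le hξ1 (by linarith)
    calc r = δ * (ξ * ξ^(-(2+a))) := by rw [hr_def, h1]
    _ ≤ (1/2) * (ξ * 1) := by
        apply mul_le_mul hδhalf _ (by positivity) (by norm_num)
        exact mul_le_mul_of_nonneg_left h2 hξ.le
    _ = ξ/2 := by ring
  set C : ℝ := K * ξ^(2*(1+a)) with hC_def
  have hC : 0 < C := mul_pos hK (Real.rpow_pos_of_pos hξ _)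
  -- pointwise bound on the near region
  have hpt : ∀ η ∈ Set.Ioc ξ (ξ+r),
      ENNReal.ofReal (C * (η - ξ)^(1-2*b)) ≤
        (‖Complex.exp (Complex.I * (t₂ : ℂ) * ((ξ * |ξ| ^ (1 + a) : ℝ) : ℂ))
            - Complex.exp (Complex.I * (t₂ : ℂ) * ((η * |η| ^ (1 + a) : ℝ) : ℂ))‖₊ : ℝ≥0∞) ^ (2 : ℕ) /
          (‖ξ - η‖₊ : ℝ≥0∞) ^ (1 + 2 * b) := by
    intro η hη
    obtain ⟨hη1, hη2⟩ := hη
    have hd : 0 < η - ξ := by linarith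
    have hη32 : η ≤ (3/2)*ξ := by linarith [hrhalf]
    have hΔπ : t₂ * A * (ξ ^ (1+a)) * (η - ξ) ≤ π := by
      have h1 : η - ξ ≤ r := by linarith
      have h2 : t₂ * A * (ξ ^ (1+a)) * (η - ξ) ≤ t₂ * A * (ξ ^ (1+a)) * r := by
        apply mul_le_mul_of_nonneg_left h1 (by positivity)
      have h3 : ξ ^ (1+a) * ξ^(-(1+a)) = 1 := by
        rw [← Real.rpow_add hξ, show (1+a) + -(1+a) = 0 by ring, Real.rpow_zero]
      have h4 : t₂ * A * (ξ ^ (1+a)) * r = t₂ * A * δ := by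
        rw [hr_def]; nlinarith [h3]
      linarith [h2, h4.le, hδπ]
    have hlow := aux_pointwise a ha2 t₂ ht₂ ξ η hξ hη1 hη32 hΔπ
    -- rewrite the ENNReal expression as a single ofReal
    have habs : (‖ξ - η‖₊ : ℝ≥0∞) = ENNReal.ofReal (η - ξ) := by
      rw [← ENNReal.ofReal_coe_nnreal, coe_nnnorm, Real.norm_eq_abs, abs_sub_comm, abs_of_pos hd]
    set z := Complex.exp (Complex.I * (t₂ : ℂ) * ((ξ * |ξ| ^ (1 + a) : ℝ) : ℂ))
      - Complex.exp (Complex.I * (t₂ : ℂ) * ((η * |η| ^ (1 + a) : ℝ) : ℂ)) with hz_def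
    have hnum : (‖z‖₊ : ℝ≥0∞) ^ (2:ℕ) = ENNReal.ofReal (‖z‖^2) := by
      rw [← ENNReal.ofReal_coe_nnreal, coe_nnnorm, ← ENNReal.ofReal_pow (norm_nonneg _)]
    have hden : (‖ξ - η‖₊ : ℝ≥0∞) ^ (1+2*b) = ENNReal.ofReal ((η - ξ)^(1+2*b)) := by
      rw [habs, ENNReal.ofReal_rpow_of_pos hd]
    rw [hnum, hden, ← ENNReal.ofReal_div_of_pos (Real.rpow_pos_of_pos hd _)]
    apply ENNReal.ofReal_le_ofReal
    rw [le_div_iff₀ (Real.rpow_pos_of_pos hd _)]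
    have hexp : C * (η - ξ)^(1-2*b) * (η - ξ)^(1+2*b) = C * (η - ξ)^((2:ℝ)) := by
      rw [mul_assoc, ← Real.rpow_add hd, show (1-2*b)+(1+2*b) = 2 by ring]
    rw [hexp]
    have heq : C * (η - ξ)^((2:ℝ)) = (2/π * M * ξ^(1+a) * (η - ξ))^2 := by
      rw [Real.rpow_two, hC_def, hK_def, show 2*(1+a) = (1+a)*2 by ring,
        Real.rpow_mul hξ.le, Real.rpow_two]
      ring
    rw [heq]
    calc (2/π * M * ξ^(1+a) * (η - ξ))^2
        = (2/π * (t₂ * A * (3/2 : ℝ)^(1+a)) * ξ^(1+a) * (η - ξ))^2 := by rw [hM_def]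
    _ ≤ ‖z‖^2 := hlow
  -- integral computation
  have hint : IntegrableOn (fun s : ℝ => C * s ^ (1-2*b)) (Set.Ioc 0 r) volume := by
    have h : IntervalIntegrable (fun s : ℝ => s ^ (1-2*b)) volume 0 r :=
      intervalIntegral.intervalIntegrable_rpow' (by linarith)
    exact ((intervalIntegrable_iff_integrableOn_Ioc_of_le hrpos.le).mp h).const_mul C
  have hval : ∫ s in Set.Ioc 0 r, C * s ^ (1-2*b) = C * (r ^ (2-2*b) / (2-2*b)) := by
    rw [← intervalIntegral.integral_of_le hrpos.le, intervalIntegral.integral_const_mul,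
      integral_rpow (Or.inl (by linarith))]
    rw [Real.zero_rpow (by intro h; rw [show 1-2*b+1 = 2-2*b by ring] at h; nlinarith : (1-2*b+1) ≠ 0)]
    rw [show 1-2*b+1 = 2-2*b by ring]
    ring
  have hKval : K * δ^(2-2*b) / (2-2*b) * ξ ^ (2*((1+a)*b)) = C * (r ^ (2-2*b) / (2-2*b)) := by
    rw [hC_def, hr_def, Real.mul_rpow hδ.le hξp.le, ← Real.rpow_mul hξ.le,
      show K * ξ ^ (2 * (1 + a)) * (δ ^ (2 - 2 * b) * ξ ^ (-(1 + a) * (2 - 2 * b)) / (2 - 2 * b))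
        = K * δ ^ (2 - 2 * b) * (ξ ^ (2 * (1 + a)) * ξ ^ (-(1 + a) * (2 - 2 * b))) / (2-2*b) by ring,
      ← Real.rpow_add hξ, show 2*(1+a) + -(1+a)*(2-2*b) = 2*((1+a)*b) by ring]
    ring
  calc ENNReal.ofReal (K * δ^(2-2*b) / (2-2*b) * ξ ^ (2*((1+a)*b)))
      = ENNReal.ofReal (∫ s in Set.Ioc 0 r, C * s ^ (1-2*b)) := by rw [hval, hKval]
  _ = ∫⁻ s in Set.Ioc 0 r, ENNReal.ofReal (C * s ^ (1-2*b)) := by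
      apply ofReal_integral_eq_lintegral_ofReal hint
      filter_upwards [ae_restrict_mem measurableSet_Ioc] with s hs
      have := hs.1
      positivity
  _ = ∫⁻ η in Set.Ioc ξ (ξ+r), ENNReal.ofReal (C * (η - ξ) ^ (1-2*b)) :=
      aux_trans (fun s => ENNReal.ofReal (C * s ^ (1-2*b))) ξ r
  _ ≤ ∫⁻ η in Set.Ioc ξ (ξ+r),
        (‖Complex.exp (Complex.I * (t₂ : ℂ) * ((ξ * |ξ| ^ (1 + a) : ℝ) : ℂ))
            - Complex.exp (Complex.I * (t₂ : ℂ) * ((η * |η| ^ (1 + a) : ℝ) : ℂ))‖₊ : ℝ≥0∞) ^ (2 : ℕ) /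
          (‖ξ - η‖₊ : ℝ≥0∞) ^ (1 + 2 * b) :=
      setLIntegral_mono' measurableSet_Ioc hpt
  _ ≤ _ := setLIntegral_le_lintegral _ _

lemma aux_conj (a t₂ : ℝ) (x : ℝ) :
    Complex.exp (Complex.I * (t₂:ℂ) * (((-x) * |(-x)| ^ (1+a) : ℝ) : ℂ))
      = starRingEnd ℂ (Complex.exp (Complex.I * (t₂:ℂ) * ((x * |x| ^ (1+a) : ℝ) : ℂ))) := by
  rw [← Complex.exp_conj]
  congr 1
  rw [show ((-x) * |(-x)| ^ (1+a) : ℝ) = -(x * |x| ^ (1+a)) by rw [abs_neg]; ring]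
  rw [map_mul, map_mul, Complex.conj_I, Complex.conj_ofReal, Complex.conj_ofReal]
  push_cast
  ring

lemma aux_symm (a b t₂ : ℝ) (ξ : ℝ) :
    (∫⁻ y, (‖Complex.exp (Complex.I * (t₂ : ℂ) * ((ξ * |ξ| ^ (1 + a) : ℝ) : ℂ))
            - Complex.exp (Complex.I * (t₂ : ℂ) * ((y * |y| ^ (1 + a) : ℝ) : ℂ))‖₊ : ℝ≥0∞) ^ (2 : ℕ) /
          (‖ξ - y‖₊ : ℝ≥0∞) ^ (1 + 2 * b) ∂volume)
      = ∫⁻ y, (‖Complex.exp (Complex.I * (t₂ : ℂ) * (((-ξ) * |(-ξ)| ^ (1 + a) : ℝ) : ℂ))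
            - Complex.exp (Complex.I * (t₂ : ℂ) * ((y * |y| ^ (1 + a) : ℝ) : ℂ))‖₊ : ℝ≥0∞) ^ (2 : ℕ) /
          (‖(-ξ) - y‖₊ : ℝ≥0∞) ^ (1 + 2 * b) ∂volume := by
  have hinv := (Measure.measurePreserving_neg (volume : Measure ℝ)).lintegral_comp_emb
    (Homeomorph.neg ℝ).measurableEmbedding
    (fun y => (‖Complex.exp (Complex.I * (t₂ : ℂ) * (((-ξ) * |(-ξ)| ^ (1 + a) : ℝ) : ℂ))
            - Complex.exp (Complex.I * (t₂ : ℂ) * ((y * |y| ^ (1 + a) : ℝ) : ℂ))‖₊ : ℝ≥0∞) ^ (2 : ℕ) /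
          (‖(-ξ) - y‖₊ : ℝ≥0∞) ^ (1 + 2 * b))
  rw [← hinv]
  apply lintegral_congr
  intro y
  congr 2
  · rw [aux_conj, aux_conj, ← map_sub, RCLike.nnnorm_conj]
  · rw [show (-ξ) - (-y) = -(ξ - y) by ring, nnnorm_neg]

/-- Pointwise lower bound: for `a ∈ (-5/2,-2)`, `b ∈ (0,1)` and `t₂ > 0`, there are a
sufficiently small `c ∈ (0,1)` and `κ > 0` such that for all `ξ` with `0 < |ξ| ≤ c`,
`𝒟^b(e^{it₂ξ|ξ|^(1+a)})(ξ) ≥ κ |ξ|^{(1+a)b}`. -/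
theorem stmt17 (a : ℝ) (ha1 : -(5/2) < a) (ha2 : a < -2) (b : ℝ) (hb0 : 0 < b) (hb1 : b < 1)
    (t₂ : ℝ) (ht₂ : 0 < t₂) :
    ∃ c : ℝ, 0 < c ∧ c < 1 ∧ ∃ κ > 0, ∀ ξ : ℝ, 0 < |ξ| → |ξ| ≤ c →
      ENNReal.ofReal (κ * |ξ| ^ ((1 + a) * b)) ≤
        steinDeriv1 b
          (fun η : ℝ => Complex.exp (Complex.I * (t₂ : ℂ) * ((η * |η| ^ (1 + a) : ℝ) : ℂ))) ξ := by
  obtain ⟨K₀, hK₀, hcore⟩ := aux_core a ha1 ha2 b hb0 hb1 t₂ ht₂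
  refine ⟨1/2, by norm_num, by norm_num, K₀ ^ ((1:ℝ)/2),
    Real.rpow_pos_of_pos hK₀ _, fun ξ hξ0 hξc => ?_⟩
  have hξ1 : |ξ| ≤ 1 := by linarith
  have hL : ENNReal.ofReal (K₀ * |ξ| ^ (2*((1+a)*b))) ≤
      ∫⁻ y, (‖Complex.exp (Complex.I * (t₂ : ℂ) * ((ξ * |ξ| ^ (1 + a) : ℝ) : ℂ))
          - Complex.exp (Complex.I * (t₂ : ℂ) * ((y * |y| ^ (1 + a) : ℝ) : ℂ))‖₊ : ℝ≥0∞) ^ (2 : ℕ) /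
        (‖ξ - y‖₊ : ℝ≥0∞) ^ (1 + 2 * b) ∂volume := by
    rcases (abs_pos.mp hξ0).lt_or_gt with hneg | hpos
    · rw [aux_symm a b t₂ ξ, abs_of_neg hneg]
      exact hcore (-ξ) (by linarith) (by rw [abs_of_neg hneg] at hξ1; linarith)
    · conv_lhs => rw [abs_of_pos hpos]
      exact hcore ξ hpos (by rw [abs_of_pos hpos] at hξ1; linarith)
  unfold steinDeriv1
  simp only
  calc ENNReal.ofReal (K₀ ^ ((1:ℝ)/2) * |ξ| ^ ((1+a)*b))
      = (ENNReal.ofReal (K₀ * |ξ| ^ (2*((1+a)*b)))) ^ ((1:ℝ)/2) := by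
        rw [ENNReal.ofReal_rpow_of_pos (mul_pos hK₀ (Real.rpow_pos_of_pos hξ0 _)),
          Real.mul_rpow hK₀.le (Real.rpow_nonneg (abs_nonneg _) _),
          ← Real.rpow_mul (abs_nonneg _), show 2*((1+a)*b)*(1/2) = (1+a)*b by ring]
  _ ≤ _ := ENNReal.rpow_le_rpow hL (by norm_num)
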